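/- Expansion theorem for the forward difference operator: every linear operator T on K[x] that commutes with all shifts E^a (a ∈ K, K an infinite field of characteristic 0) can be written uniquely as T = Σ_{k=0}^{∞} c_k Δ^k / k! with c_k = (T (x)_k)(0), where (x)_k is the lower factorial and Δ the forward difference; the sum is locally finite on each polynomial. -/

import Mathlib

open Polynomial Finset

section Aux
set_option linter.unusedSectionVars false
variable {K : Type*} [Field K] [CharZero K]

/-- The forward difference operator as a linear map. -/
noncomputable def ddL : Polynomial K →ₗ[K] Polynomial K where
  toFun q := q.comp (X + 1) - q
  map_add' p q := by simp [add_comp]; ring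
  map_smul' c p := by simp [smul_comp, smul_sub]

lemma ddL_apply (q : Polynomial K) : ddL q = q.comp (X + 1) - q := rfl

lemma ddL_one : ddL (1 : Polynomial K) = 0 := by simp [ddL_apply]

lemma ddL_descPochhammer (n : ℕ) :
    ddL (descPochhammer K (n + 1)) = C ((n : K) + 1) * descPochhammer K n := by
  have h1 : (descPochhammer K (n+1)).comp (X+1) = (X+1) * descPochhammer K n := by
    rw [descPochhammer_succ_left, mul_comp, X_comp, comp_assoc, sub_comp, X_comp, one_comp]
    simp
  rw [ddL_apply, h1, descPochhammer_succ_right]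
  simp only [map_add, map_one, C_eq_natCast]
  ring

lemma ddL_iter_descPochhammer (k : ℕ) :
    ∀ j ≤ k, (⇑(ddL (K := K)))^[j] (descPochhammer K k) =
      C ((k.descFactorial j : K)) * descPochhammer K (k - j) := by
  intro j
  induction j with
  | zero => intro _; simp
  | succ j ih =>
    intro hjk
    rw [Function.iterate_succ_apply', ih (by omega), ← smul_eq_C_mul, map_smul]
    have hk : k - j = (k - (j+1)) + 1 := by omega
    rw [hk, ddL_descPochhammer, smul_eq_C_mul, ← mul_assoc, ← C_mul]
    congr 2
    have h2 : (k - (j+1)) + 1 = k - j := by omega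
    rw [Nat.descFactorial_succ]
    have h3 : ((k - (j+1) : ℕ) : K) + 1 = ((k - j : ℕ) : K) := by
      rw [← h2]; push_cast; ring
    rw [h3]
    push_cast
    ring

lemma ddL_iter_desc_eval_zero {k j : ℕ} (hj : j < k) :
    (((⇑(ddL (K := K)))^[j] (descPochhammer K k)).eval 0) = 0 := by
  rw [ddL_iter_descPochhammer k j (le_of_lt hj)]
  rw [eval_mul, eval_C, descPochhammer_ne_zero_eval_zero (R := K) (by omega), mul_zero]

lemma ddL_iter_desc_eval_zero_self (k : ℕ) :
    (((⇑(ddL (K := K)))^[k] (descPochhammer K k)).eval 0) = (k.factorial : K) := by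
  rw [ddL_iter_descPochhammer k k le_rfl]
  simp [Nat.descFactorial_self]

lemma ddL_comp_shift (p : Polynomial K) (a : K) :
    ddL (p.comp (X + C a)) = (ddL p).comp (X + C a) := by
  have h : ((X : Polynomial K) + C a).comp (X + 1) = (X + 1).comp (X + C a) := by
    simp only [add_comp, X_comp, C_comp, one_comp]
    ring
  rw [ddL_apply, ddL_apply, sub_comp, comp_assoc, h, ← comp_assoc]

lemma ddL_iter_comp_shift (k : ℕ) (p : Polynomial K) (a : K) :
    (⇑(ddL (K := K)))^[k] (p.comp (X + C a)) = ((⇑(ddL (K := K)))^[k] p).comp (X + C a) := by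
  induction k with
  | zero => rfl
  | succ k ih => rw [Function.iterate_succ_apply', Function.iterate_succ_apply', ih,
      ddL_comp_shift]

lemma natDegree_ddL_le {p : Polynomial K} {n : ℕ} (h : p.natDegree ≤ n + 1) :
    (ddL p).natDegree ≤ n := by
  rw [ddL_apply, natDegree_le_iff_coeff_eq_zero]
  intro m hm
  have hX1 : (X + 1 : Polynomial K).natDegree = 1 := by
    simpa using natDegree_X_add_C (1 : K)
  have hcompdeg : (p.comp (X + 1)).natDegree = p.natDegree := by
    rw [natDegree_comp, hX1, mul_one]
  rw [coeff_sub]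
  by_cases hmp : p.natDegree < m
  · rw [coeff_eq_zero_of_natDegree_lt hmp, coeff_eq_zero_of_natDegree_lt (by omega), sub_zero]
  · have hm' : m = p.natDegree := by omega
    subst hm'
    have := coeff_comp_degree_mul_degree (p := p) (q := X + 1) (by rw [hX1]; omega)
    rw [hX1, mul_one] at this
    rw [this]
    have hlc : (X + 1 : Polynomial K).leadingCoeff = 1 := by
      have hm := monic_X_add_C (1 : K); rw [map_one] at hm; exact hm
    rw [hlc, one_pow, mul_one, Polynomial.leadingCoeff, sub_self]

lemma eq_zero_of_ddL_eq_zero {q : Polynomial K} (h : ddL q = 0) (h0 : q.eval 0 = 0) :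
    q = 0 := by
  have key : ∀ n : ℕ, q.eval (n : K) = 0 := by
    intro n
    induction n with
    | zero => simpa using h0
    | succ n ih =>
      have h1 : q.comp (X + 1) = q := by
        have := sub_eq_zero.mp ((ddL_apply q) ▸ h)
        exact this
      have := congrArg (eval (n : K)) h1
      rw [eval_comp] at this
      simp only [eval_add, eval_X, eval_one] at this
      rw [ih] at this
      push_cast
      exact this
  apply eq_zero_of_infinite_isRoot
  apply Set.infinite_of_injective_forall_mem (f := fun n : ℕ => (n : K))
  · exact fun a b hab => Nat.cast_injective hab
  · exact fun n => key n

lemma newton_expansion (n : ℕ) : ∀ p : Polynomial K, p.natDegree ≤ n →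
    p = ∑ k ∈ Finset.range (n + 1),
      C (((⇑(ddL (K := K)))^[k] p).eval 0 / (k.factorial : K)) * descPochhammer K k := by
  induction n with
  | zero =>
    intro p hp
    rw [Finset.sum_range_one]
    simp only [Function.iterate_zero, id_eq, Nat.factorial_zero, Nat.cast_one, div_one,
      descPochhammer_zero, mul_one]
    rw [← coeff_zero_eq_eval_zero]
    exact Polynomial.eq_C_of_natDegree_le_zero hp
  | succ n ih =>
    intro p hp
    set r := ∑ k ∈ Finset.range (n + 2),
      C (((⇑(ddL (K := K)))^[k] p).eval 0 / (k.factorial : K)) * descPochhammer K k with hr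
    have hddr : ddL r = ddL p := by
      rw [hr]
      simp only [← smul_eq_C_mul]
      rw [map_sum]
      simp only [map_smul]
      rw [Finset.sum_range_succ']
      simp only [descPochhammer_zero, ddL_one, smul_zero, add_zero]
      have : ∀ i ∈ Finset.range (n + 1),
          (((⇑(ddL (K := K)))^[i+1] p).eval 0 / ((i+1).factorial : K)) •
            ddL (descPochhammer K (i + 1)) =
          C (((⇑(ddL (K := K)))^[i] (ddL p)).eval 0 / (i.factorial : K)) *
            descPochhammer K i := by
        intro i _
        rw [ddL_descPochhammer, smul_eq_C_mul, ← mul_assoc, ← C_mul,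
          Function.iterate_succ_apply]
        congr 2
        have h1 : ((i + 1 : ℕ).factorial : K) = ((i : K) + 1) * (i.factorial : K) := by
          rw [Nat.factorial_succ]; push_cast; ring
        have h2 : ((i : K) + 1) ≠ 0 := by
          have : ((i + 1 : ℕ) : K) ≠ 0 := Nat.cast_ne_zero.mpr (by omega)
          push_cast at this; exact this
        have h3 : (i.factorial : K) ≠ 0 := Nat.cast_ne_zero.mpr i.factorial_ne_zero
        field_simp [h1]
        rw [h1]; ring
      rw [Finset.sum_congr rfl this]
      exact (ih (ddL p) (natDegree_ddL_le hp)).symm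
    have h0 : r.eval 0 = p.eval 0 := by
      rw [hr, eval_finset_sum]
      rw [Finset.sum_eq_single_of_mem 0 (Finset.mem_range.mpr (by omega))]
      · simp
      · intro j _ hj
        rw [eval_mul, descPochhammer_ne_zero_eval_zero (R := K) hj, mul_zero]
    have : p - r = 0 := by
      apply eq_zero_of_ddL_eq_zero
      · rw [map_sub, hddr, sub_self]
      · rw [eval_sub, h0, sub_self]
    have := sub_eq_zero.mp this
    exact this

end Aux

/-- Expansion theorem for the forward difference operator: every linear
operator `T` on `K[x]` commuting with all shifts `E^a` expands uniquely as
`T = Σ_k c_k Δ^k / k!` with `c_k = (T (x)_k)(0)`. -/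
theorem expansion_theorem_forward_difference {K : Type*} [Field K] [CharZero K]
    (T : Polynomial K →ₗ[K] Polynomial K)
    (hT : ∀ (a : K) (p : Polynomial K),
      T (p.comp (X + C a)) = (T p).comp (X + C a)) :
    (∀ p : Polynomial K,
      T p = ∑ k ∈ Finset.range (p.natDegree + 1),
        C (((T (descPochhammer K k)).eval 0) / (k.factorial : K)) *
          (fun q : Polynomial K => q.comp (X + 1) - q)^[k] p) ∧
    (∀ c : ℕ → K,
      (∀ p : Polynomial K,
        T p = ∑ k ∈ Finset.range (p.natDegree + 1),
          C (c k / (k.factorial : K)) *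
            (fun q : Polynomial K => q.comp (X + 1) - q)^[k] p) →
      ∀ k, c k = (T (descPochhammer K k)).eval 0) := by
  have hfun : (fun q : Polynomial K => q.comp (X + 1) - q) = ⇑(ddL (K := K)) := rfl
  constructor
  · intro p
    rw [hfun]
    apply Polynomial.funext
    intro a
    have h1 : (T p).eval a = (T (p.comp (X + C a))).eval 0 := by
      rw [hT a p, eval_comp]
      simp
    have hq : (p.comp (X + C a)).natDegree ≤ p.natDegree := by
      rw [natDegree_comp, natDegree_X_add_C, mul_one]
    have hN := newton_expansion p.natDegree (p.comp (X + C a)) hq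
    rw [h1]
    conv_lhs => rw [hN]
    simp only [← smul_eq_C_mul]
    rw [map_sum, eval_finset_sum, eval_finset_sum]
    apply Finset.sum_congr rfl
    intro k _
    rw [ddL_iter_comp_shift, map_smul]
    simp [smul_eq_C_mul, eval_comp]
    ring
  · intro c hc k
    have h := hc (descPochhammer K k)
    rw [hfun, descPochhammer_natDegree] at h
    have h2 := congrArg (Polynomial.eval 0) h
    rw [eval_finset_sum, Finset.sum_eq_single_of_mem k (Finset.self_mem_range_succ k)] at h2
    · rw [eval_mul, eval_C, ddL_iter_desc_eval_zero_self] at h2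
      have hfac : (k.factorial : K) ≠ 0 := Nat.cast_ne_zero.mpr k.factorial_ne_zero
      rw [div_mul_cancel₀ _ hfac] at h2
      exact h2.symm
    · intro j hj hjk
      rw [eval_mul, ddL_iter_desc_eval_zero (by simp at hj; omega), mul_zero]
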